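/- The theory NFU is consistent: there exists a nonempty structure for the language with a single binary relation symbol ∈ in which the weak extensionality axiom and every instance of stratified comprehension are true (equivalently, the theory NFU is satisfiable). -/

import Mathlib

namespace NFUConsistency

/-- Formulas of the first-order language `L` with a single binary relation symbol `∈`
(and equality), and no function or constant symbols; variables are indexed by `ℕ`. -/
inductive Fml : Type
  | eq : ℕ → ℕ → Fml
  | mem : ℕ → ℕ → Fml
  | not : Fml → Fml
  | imp : Fml → Fml → Fml
  | all : ℕ → Fml → Fml

namespace Fml

/-- The variable `x` occurs (anywhere) in the formula. -/
def Occurs (x : ℕ) : Fml → Prop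
  | .eq y z => x = y ∨ x = z
  | .mem y z => x = y ∨ x = z
  | .not φ => Occurs x φ
  | .imp φ ψ => Occurs x φ ∨ Occurs x ψ
  | .all y φ => x = y ∨ Occurs x φ

/-- `σ` stratifies the formula: `σ x = σ y` for each atomic subformula `x = y`,
and `σ x + 1 = σ y` for each atomic subformula `x ∈ y`. -/
def StratifiedBy (σ : ℕ → ℤ) : Fml → Prop
  | .eq y z => σ y = σ z
  | .mem y z => σ y + 1 = σ z
  | .not φ => StratifiedBy σ φ
  | .imp φ ψ => StratifiedBy σ φ ∧ StratifiedBy σ ψ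
  | .all _ φ => StratifiedBy σ φ

/-- A formula is stratified if some integer-valued assignment of types to variables
stratifies it. -/
def Stratified (φ : Fml) : Prop := ∃ σ : ℕ → ℤ, StratifiedBy σ φ

/-- Conjunction, as a defined connective. -/
def andF (φ ψ : Fml) : Fml := not (imp φ (not ψ))

/-- Biconditional, as a defined connective. -/
def iffF (φ ψ : Fml) : Fml := andF (imp φ ψ) (imp ψ φ)

/-- Existential quantification, as a defined quantifier. -/
def exF (x : ℕ) (φ : Fml) : Fml := not (all x (not φ))

/-- Tarskian satisfaction of a formula in the structure `(M, E)` under a valuation. -/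
def Sat (M : Type) (E : M → M → Prop) : Fml → (ℕ → M) → Prop
  | .eq y z, v => v y = v z
  | .mem y z, v => E (v y) (v z)
  | .not φ, v => ¬ Sat M E φ v
  | .imp φ ψ, v => Sat M E φ v → Sat M E ψ v
  | .all y φ, v => ∀ a : M, Sat M E φ (Function.update v y a)

end Fml

/-- The weak extensionality axiom `∀x∀y∀z (z ∈ x → (x = y ↔ ∀w (w ∈ x ↔ w ∈ y)))`. -/
def weakExtAxiom : Fml :=
  .all 0 (.all 1 (.all 2 (.imp (.mem 2 0)
    (Fml.iffF (.eq 0 1) (.all 3 (Fml.iffF (.mem 3 0) (.mem 3 1)))))))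

/-- The comprehension instance `∃A ∀x (x ∈ A ↔ φ)`. -/
def comprehension (x A : ℕ) (φ : Fml) : Fml :=
  Fml.exF A (.all x (Fml.iffF (.mem x A) φ))

/-- A formula is true in `(M, E)` if it is satisfied under every valuation; for a
formula with free variables this is exactly the truth of its universal closure. -/
def TrueIn (M : Type) (E : M → M → Prop) (φ : Fml) : Prop :=
  ∀ v : ℕ → M, Fml.Sat M E φ v

/-! ### Auxiliary infrastructure -/

namespace Fml

/-- The largest variable index occurring in a formula. -/
def maxVar : Fml → ℕ
  | .eq y z => max y z
  | .mem y z => max y z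
  | .not φ => maxVar φ
  | .imp φ ψ => max (maxVar φ) (maxVar ψ)
  | .all y φ => max y (maxVar φ)

theorem le_maxVar_of_occurs {u : ℕ} : ∀ {φ : Fml}, Occurs u φ → u ≤ maxVar φ := by
  intro φ
  induction φ with
  | eq y z => rintro (rfl | rfl) <;> simp [maxVar]
  | mem y z => rintro (rfl | rfl) <;> simp [maxVar]
  | not φ ih => intro h; exact ih h
  | imp φ ψ ih1 ih2 =>
      rintro (h | h)
      · exact le_trans (ih1 h) (le_max_left _ _)
      · exact le_trans (ih2 h) (le_max_right _ _)
  | all y φ ih =>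
      rintro (rfl | h)
      · simp [maxVar]
      · exact le_trans (ih h) (le_max_right _ _)

theorem sat_congr {M : Type} {E : M → M → Prop} :
    ∀ (φ : Fml) {v w : ℕ → M}, (∀ u, Occurs u φ → v u = w u) →
      (Sat M E φ v ↔ Sat M E φ w) := by
  intro φ
  induction φ with
  | eq y z =>
      intro v w h
      have hy : v y = w y := h y (Or.inl rfl)
      have hz : v z = w z := h z (Or.inr rfl)
      simp [Sat, hy, hz]
  | mem y z =>
      intro v w h
      have hy : v y = w y := h y (Or.inl rfl)
      have hz : v z = w z := h z (Or.inr rfl)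
      simp [Sat, hy, hz]
  | not φ ih => intro v w h; simpa [Sat] using not_congr (ih h)
  | imp φ ψ ih1 ih2 =>
      intro v w h
      simpa [Sat] using imp_congr (ih1 fun u hu => h u (Or.inl hu))
        (ih2 fun u hu => h u (Or.inr hu))
  | all y φ ih =>
      intro v w h
      simp only [Sat]
      refine forall_congr' fun a => ih fun u hu => ?_
      by_cases huy : u = y
      · subst huy; simp
      · simp [Function.update_of_ne huy, h u (Or.inr hu)]

theorem sat_andF {M : Type} {E : M → M → Prop} {φ ψ : Fml} {v : ℕ → M} :
    Sat M E (andF φ ψ) v ↔ Sat M E φ v ∧ Sat M E ψ v := by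
  simp only [andF, Sat]; tauto

theorem sat_iffF {M : Type} {E : M → M → Prop} {φ ψ : Fml} {v : ℕ → M} :
    Sat M E (iffF φ ψ) v ↔ (Sat M E φ v ↔ Sat M E ψ v) := by
  simp only [iffF, andF, Sat]; tauto

theorem sat_exF {M : Type} {E : M → M → Prop} {φ : Fml} {y : ℕ} {v : ℕ → M} :
    Sat M E (exF y φ) v ↔ ∃ a : M, Sat M E φ (Function.update v y a) := by
  simp [exF, Sat]

end Fml

open Fml

/-- An elementary map between `∈`-structures. -/
def Elem {M N : Type} (E : M → M → Prop) (F : N → N → Prop) (f : M → N) : Prop :=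
  ∀ (φ : Fml) (v : ℕ → M), Sat N F φ (fun u => f (v u)) ↔ Sat M E φ v

theorem Elem.comp {M N P : Type} {E : M → M → Prop} {F : N → N → Prop}
    {G : P → P → Prop} {f : M → N} {g : N → P} (hg : Elem F G g) (hf : Elem E F f) :
    Elem E G (fun x => g (f x)) := fun φ v => (hg φ (fun u => f (v u))).trans (hf φ v)

theorem Elem.injective {M N : Type} {E : M → M → Prop} {F : N → N → Prop} {f : M → N}
    (hf : Elem E F f) : Function.Injective f := by
  intro a b hab
  have h := hf (.eq 0 1) (fun u => if u = 0 then a else b)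
  simpa [Fml.Sat, hab] using h

theorem Elem.mem_iff {M N : Type} {E : M → M → Prop} {F : N → N → Prop} {f : M → N}
    (hf : Elem E F f) (a b : M) : F (f a) (f b) ↔ E a b := by
  have h := hf (.mem 0 1) (fun u => if u = 0 then a else b)
  simpa [Fml.Sat] using h

/-! ### Ultrapowers and Łoś's theorem -/

noncomputable section

/-- The fixed free ultrafilter on `ℕ`. -/
def U : Ultrafilter ℕ := Filter.hyperfilter ℕ

theorem U_cofinite {p : ℕ → Prop} (h : ∀ᶠ i in Filter.cofinite, p i) : ∀ᶠ i in ↑U, p i :=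
  (Filter.hyperfilter_le_cofinite) h

def usetoid (M : Type) : Setoid (ℕ → M) where
  r g h := ∀ᶠ i in ↑U, g i = h i
  iseqv := by
    constructor
    · intro g; exact Filter.Eventually.of_forall fun i => rfl
    · intro g h hg; exact hg.mono fun i e => e.symm
    · intro a b c h1 h2; exact (h1.and h2).mono fun i ⟨e1, e2⟩ => e1.trans e2

/-- Ultrapower of a type by `U`. -/
def Ult (M : Type) : Type := Quotient (usetoid M)

def Ult.mk {M : Type} (g : ℕ → M) : Ult M := Quotient.mk (usetoid M) g

def uE {M : Type} (E : M → M → Prop) : Ult M → Ult M → Prop :=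
  Quotient.lift₂ (fun g h => ∀ᶠ i in ↑U, E (g i) (h i)) (by
    intro a b a' b' ha hb
    refine propext ?_
    constructor
    · intro h; exact ((h.and ha).and hb).mono (by rintro i ⟨⟨h1, h2⟩, h3⟩; rw [← h2, ← h3]; exact h1)
    · intro h; exact ((h.and ha).and hb).mono (by rintro i ⟨⟨h1, h2⟩, h3⟩; rw [h2, h3]; exact h1))

theorem uE_mk {M : Type} {E : M → M → Prop} (g h : ℕ → M) :
    uE E (Ult.mk g) (Ult.mk h) ↔ ∀ᶠ i in ↑U, E (g i) (h i) := Iff.rfl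

theorem ult_ind {M : Type} {p : Ult M → Prop} (h : ∀ g, p (Ult.mk g)) : ∀ a, p a :=
  fun a => Quotient.ind h a

theorem ult_mk_eq {M : Type} {g h : ℕ → M} :
    Ult.mk g = Ult.mk h ↔ ∀ᶠ i in ↑U, g i = h i := by
  constructor
  · intro e; exact Quotient.exact e
  · intro e; exact Quotient.sound e

/-- Łoś's theorem for `U`-ultrapowers. -/
theorem los {M : Type} {E : M → M → Prop} :
    ∀ (φ : Fml) (v : ℕ → (ℕ → M)),
      Sat (Ult M) (uE E) φ (fun u => Ult.mk (v u)) ↔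
        ∀ᶠ i in ↑U, Sat M E φ (fun u => v u i) := by
  intro φ
  induction φ with
  | eq y z =>
      intro v
      simpa [Fml.Sat] using (ult_mk_eq (g := v y) (h := v z))
  | mem y z => intro v; exact Iff.rfl
  | not φ ih =>
      intro v
      simpa [Fml.Sat] using (not_congr (ih v)).trans (Ultrafilter.eventually_not).symm
  | imp φ ψ ih1 ih2 =>
      intro v
      simp only [Fml.Sat]
      rw [ih1 v, ih2 v]
      exact Ultrafilter.eventually_imp.symm
  | all y φ ih =>
      intro v
      simp only [Fml.Sat]
      constructor
      · intro H
        by_contra hc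
        have h1 : ∀ᶠ i in ↑U, ∃ b : M, ¬ Sat M E φ (Function.update (fun u => v u i) y b) := by
          have h0 : ∀ᶠ i in ↑U, ¬ ∀ b : M,
              Sat M E φ (Function.update (fun u => v u i) y b) :=
            Ultrafilter.eventually_not.2 hc
          refine h0.mono fun i hi => ?_
          push_neg at hi; exact hi
        classical
        set f : ℕ → M := fun i =>
          if h : ∃ b : M, ¬ Sat M E φ (Function.update (fun u => v u i) y b)
          then h.choose else v 0 i with hf
        have h2 : ∀ᶠ i in ↑U, ¬ Sat M E φ (Function.update (fun u => v u i) y (f i)) := by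
          refine h1.mono fun i hi => ?_
          rw [hf]; simp only [dif_pos hi]; exact hi.choose_spec
        have h3 := H (Ult.mk f)
        have heq : Function.update (fun u => Ult.mk (v u)) y (Ult.mk f)
            = fun u => Ult.mk (Function.update v y f u) := by
          funext u
          by_cases huy : u = y
          · subst huy; simp
          · simp [Function.update_of_ne huy]
        rw [heq, ih] at h3
        have h4 : ∀ᶠ i in ↑U, Sat M E φ (Function.update (fun u => v u i) y (f i)) := by
          refine h3.mono fun i hi => ?_
          have : (fun u => Function.update v y f u i) =
              Function.update (fun u => v u i) y (f i) := by
            funext u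
            by_cases huy : u = y
            · subst huy; simp
            · simp [Function.update_of_ne huy]
          rwa [this] at hi
        rcases (h2.and h4).exists with ⟨i, hni, hyi⟩
        exact hni hyi
      · intro H a
        induction a using ult_ind with
        | h g =>
          have heq : Function.update (fun u => Ult.mk (v u)) y (Ult.mk g)
              = fun u => Ult.mk (Function.update v y g u) := by
            funext u
            by_cases huy : u = y
            · subst huy; simp
            · simp [Function.update_of_ne huy]
          rw [heq, ih]
          refine H.mono fun i hi => ?_
          have : (fun u => Function.update v y g u i) =
              Function.update (fun u => v u i) y (g i) := by
            funext u
            by_cases huy : u = y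
            · subst huy; simp
            · simp [Function.update_of_ne huy]
          rw [this]; exact hi (g i)

/-- The canonical (diagonal) embedding into the ultrapower. -/
def uEmb {M : Type} (x : M) : Ult M := Ult.mk (fun _ => x)

theorem uEmb_elem {M : Type} {E : M → M → Prop} : Elem E (uE E) (uEmb (M := M)) := by
  intro φ v
  rw [show (fun u => uEmb (v u)) = fun u => Ult.mk (fun _ => v u) from rfl, los]
  constructor
  · intro h; rcases h.exists with ⟨i, hi⟩; exact hi
  · intro h; exact Filter.Eventually.of_forall fun i => h

/-- Functorial action on ultrapowers. -/
def uMap {M N : Type} (f : M → N) : Ult M → Ult N :=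
  Quotient.lift (fun g => Ult.mk (f ∘ g)) (by
    intro a b hab
    exact Quotient.sound (hab.mono fun i e => by simp [e]))

theorem uMap_mk {M N : Type} (f : M → N) (g : ℕ → M) :
    uMap f (Ult.mk g) = Ult.mk (f ∘ g) := rfl

theorem uMap_elem {M N : Type} {E : M → M → Prop} {F : N → N → Prop} {f : M → N}
    (hf : Elem E F f) : Elem (uE E) (uE F) (uMap f) := by
  intro φ v
  have hv : ∀ u, v u = Ult.mk (Quotient.out (v u)) := fun u => (Quotient.out_eq _).symm
  have e1 : (fun u => uMap f (v u)) = fun u => Ult.mk (fun i => f (Quotient.out (v u) i)) := by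
    funext u
    conv_lhs => rw [hv u]
    rfl
  rw [e1, los]
  conv_rhs => rw [show v = fun u => Ult.mk (fun i => Quotient.out (v u) i)
    from funext fun u => (hv u)]
  rw [los]
  exact Filter.eventually_congr (Filter.Eventually.of_forall
    fun i => hf φ (fun u => Quotient.out (v u) i))

theorem uMap_uEmb {M N : Type} (f : M → N) (x : M) :
    uMap f (uEmb x) = uEmb (f x) := rfl

end

/-! ### Colimits of elementary chains -/

section Colimit

variable {A : ℕ → Type} {EA : ∀ n, A n → A n → Prop}

/-- Transition maps along a chain. -/
def tr (F : ∀ n, A n → A (n+1)) {n m : ℕ} (h : n ≤ m) : A n → A m :=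
  fun x => Nat.leRecOn h (fun {k} => F k) x

theorem tr_self (F : ∀ n, A n → A (n+1)) {n : ℕ} (h : n ≤ n) (x : A n) :
    tr F h x = x := Nat.leRecOn_self x

theorem tr_succ (F : ∀ n, A n → A (n+1)) {n m : ℕ} (h : n ≤ m) {h2 : n ≤ m + 1} (x : A n) :
    tr F h2 x = F m (tr F h x) := Nat.leRecOn_succ h x

theorem tr_trans (F : ∀ n, A n → A (n+1)) {n m k : ℕ} (h1 : n ≤ m) (h2 : m ≤ k)
    {h3 : n ≤ k} (x : A n) : tr F h3 x = tr F h2 (tr F h1 x) := by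
  have := Nat.leRecOn_trans (C := A) h1 h2 (next := fun {k} => F k) x
  exact this

theorem tr_elem (F : ∀ n, A n → A (n+1)) (hF : ∀ n, Elem (EA n) (EA (n+1)) (F n))
    {n m : ℕ} (h : n ≤ m) : Elem (EA n) (EA m) (tr F h) := by
  induction m, h using Nat.le_induction with
  | base =>
      intro φ v
      have : (fun u => tr F (le_refl n) (v u)) = v := funext fun u => tr_self F _ _
      rw [this]
  | succ m hm ih =>
      intro φ v
      have : (fun u => tr F (Nat.le_succ_of_le hm) (v u))
          = fun u => F m (tr F hm (v u)) := funext fun u => tr_succ F hm _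
      rw [this]
      exact ((hF m).comp ih) φ v

variable (F : ∀ n, A n → A (n+1))

/-- The colimit setoid. -/
def csetoid : Setoid ((n : ℕ) × A n) where
  r p q := ∃ (m : ℕ) (h1 : p.1 ≤ m) (h2 : q.1 ≤ m), tr F h1 p.2 = tr F h2 q.2
  iseqv := by
    constructor
    · exact fun p => ⟨p.1, le_refl _, le_refl _, rfl⟩
    · rintro p q ⟨m, h1, h2, h⟩; exact ⟨m, h2, h1, h.symm⟩
    · rintro p q r ⟨m1, h1, h2, h⟩ ⟨m2, h1', h2', h'⟩
      refine ⟨max m1 m2, h1.trans (le_max_left _ _), h2'.trans (le_max_right _ _), ?_⟩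
      calc tr F (h1.trans (le_max_left m1 m2)) p.2
          = tr F (le_max_left m1 m2) (tr F h1 p.2) := tr_trans F h1 (le_max_left m1 m2) p.2
        _ = tr F (le_max_left m1 m2) (tr F h2 q.2) := by rw [h]
        _ = tr F (h2.trans (le_max_left m1 m2)) q.2 := (tr_trans F h2 (le_max_left m1 m2) q.2).symm
        _ = tr F (le_max_right m1 m2) (tr F h1' q.2) := tr_trans F h1' (le_max_right m1 m2) q.2
        _ = tr F (le_max_right m1 m2) (tr F h2' r.2) := by rw [h']
        _ = tr F (h2'.trans (le_max_right m1 m2)) r.2 :=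
            (tr_trans F h2' (le_max_right m1 m2) r.2).symm

/-- The colimit of a chain. -/
def Colim : Type := Quotient (csetoid F)

/-- Insertion into the colimit. -/
def cmk (n : ℕ) (x : A n) : Colim F := Quotient.mk (csetoid F) ⟨n, x⟩

theorem cmk_eq_iff {n m : ℕ} {x : A n} {y : A m} :
    cmk F n x = cmk F m y ↔ ∃ (L : ℕ) (h1 : n ≤ L) (h2 : m ≤ L), tr F h1 x = tr F h2 y :=
  ⟨fun h => Quotient.exact h, fun h => Quotient.sound h⟩

theorem cmk_tr {n m : ℕ} (h : n ≤ m) (x : A n) : cmk F m (tr F h x) = cmk F n x :=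
  Quotient.sound ⟨m, le_refl m, h, tr_self F _ _⟩

theorem colim_ind {p : Colim F → Prop} (h : ∀ n x, p (cmk F n x)) : ∀ z, p z := by
  intro z
  induction z using Quotient.ind with
  | _ a => exact h a.1 a.2

theorem exists_rep_ge (z : Colim F) (n : ℕ) :
    ∃ (m : ℕ) (_ : n ≤ m) (x : A m), z = cmk F m x := by
  induction z using colim_ind with
  | h n0 x0 =>
      exact ⟨max n0 n, le_max_right _ _, tr F (le_max_left _ _) x0,
        (cmk_tr F (le_max_left _ _) x0).symm⟩

variable (hF : ∀ n, Elem (EA n) (EA (n+1)) (F n))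

include hF in
theorem cmk_inj {n : ℕ} {x y : A n} (h : cmk F n x = cmk F n y) : x = y := by
  rcases (cmk_eq_iff F).1 h with ⟨L, h1, h2, hxy⟩
  exact (tr_elem F hF h1).injective hxy

/-- Membership relation on the colimit. -/
def cE (hF : ∀ n, Elem (EA n) (EA (n+1)) (F n)) : Colim F → Colim F → Prop :=
  Quotient.lift₂
    (fun p q => ∃ (m : ℕ) (h1 : p.1 ≤ m) (h2 : q.1 ≤ m), EA m (tr F h1 p.2) (tr F h2 q.2))
    (by
      have key : ∀ (p q p' q' : (n : ℕ) × A n), (csetoid F).r p p' → (csetoid F).r q q' →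
          (∃ (m : ℕ) (h1 : p.1 ≤ m) (h2 : q.1 ≤ m), EA m (tr F h1 p.2) (tr F h2 q.2)) →
          (∃ (m : ℕ) (h1 : p'.1 ≤ m) (h2 : q'.1 ≤ m), EA m (tr F h1 p'.2) (tr F h2 q'.2)) := by
        rintro p q p' q' ⟨mp, hp1, hp2, hp⟩ ⟨mq, hq1, hq2, hq⟩ ⟨m, h1, h2, hE⟩
        set L := max (max m mp) mq with hL
        have hmL : m ≤ L := le_trans (le_max_left _ _) (le_max_left _ _)
        have hpL : mp ≤ L := le_trans (le_max_right _ _) (le_max_left _ _)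
        have hqL : mq ≤ L := le_max_right _ _
        refine ⟨L, hp2.trans hpL, hq2.trans hqL, ?_⟩
        have e1 : tr F (hp2.trans hpL) p'.2 = tr F (h1.trans hmL) p.2 := by
          rw [tr_trans F hp2 hpL, ← hp, ← tr_trans F hp1 hpL (h3 := hp1.trans hpL), tr_trans F h1 hmL]
        have e2 : tr F (hq2.trans hqL) q'.2 = tr F (h2.trans hmL) q.2 := by
          rw [tr_trans F hq2 hqL, ← hq, ← tr_trans F hq1 hqL (h3 := hq1.trans hqL), tr_trans F h2 hmL]
        rw [e1, e2, tr_trans F h1 hmL, tr_trans F h2 hmL]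
        exact ((tr_elem F hF hmL).mem_iff _ _).2 hE
      intro p q p' q' hp hq
      refine propext ⟨fun h => key p q p' q' hp hq h, fun h => key p' q' p q ?_ ?_ h⟩
      · exact (csetoid F).iseqv.symm hp
      · exact (csetoid F).iseqv.symm hq)

theorem cE_cmk {n : ℕ} (x y : A n) : cE F hF (cmk F n x) (cmk F n y) ↔ EA n x y := by
  constructor
  · rintro ⟨m, h1, h2, hE⟩
    exact ((tr_elem F hF h1).mem_iff _ _).1 hE
  · intro h
    exact ⟨n, le_refl n, le_refl n, by rw [tr_self, tr_self]; exact h⟩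

theorem sat_colim : ∀ (φ : Fml) (n : ℕ) (v : ℕ → A n),
    Sat (Colim F) (cE F hF) φ (fun u => cmk F n (v u)) ↔ Sat (A n) (EA n) φ v := by
  intro φ
  induction φ with
  | eq y z =>
      intro n v
      simp only [Fml.Sat]
      exact ⟨fun h => cmk_inj F hF h, fun h => by rw [h]⟩
  | mem y z => intro n v; exact cE_cmk F hF _ _
  | not φ ih => intro n v; simp only [Fml.Sat]; exact not_congr (ih n v)
  | imp φ ψ ih1 ih2 => intro n v; simp only [Fml.Sat]; exact imp_congr (ih1 n v) (ih2 n v)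
  | all y φ ih =>
      intro n v
      simp only [Fml.Sat]
      constructor
      · intro H b
        have h := H (cmk F n b)
        have e : Function.update (fun u => cmk F n (v u)) y (cmk F n b)
            = fun u => cmk F n (Function.update v y b u) := by
          funext u
          by_cases huy : u = y
          · subst huy; simp
          · simp [Function.update_of_ne huy]
        rw [e, ih] at h
        exact h
      · intro H a
        rcases exists_rep_ge F a n with ⟨m, hnm, x, rfl⟩
        have Hm : Sat (A m) (EA m) (.all y φ) (fun u => tr F hnm (v u)) :=
          (tr_elem F hF hnm (.all y φ) v).2 H
        have h := Hm x
        rw [← ih m] at h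
        have e : (fun u => cmk F m (Function.update (fun u' => tr F hnm (v u')) y x u))
            = Function.update (fun u => cmk F n (v u)) y (cmk F m x) := by
          funext u
          by_cases huy : u = y
          · subst huy; simp
          · simp [Function.update_of_ne huy, cmk_tr]
        rw [e] at h
        exact h

theorem trueIn_colim (hne : Nonempty (A 0)) (φ : Fml)
    (h : ∀ n, TrueIn (A n) (EA n) φ) : TrueIn (Colim F) (cE F hF) φ := by
  intro v
  classical
  choose m hm x hx using fun u => exists_rep_ge F (v u) 0
  set L := Finset.sup (Finset.range (maxVar φ + 1)) m with hL
  haveI : Nonempty (A L) := hne.map (tr F (Nat.zero_le L))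
  set w : ℕ → A L := fun u => if h : m u ≤ L then tr F h (x u) else Classical.arbitrary _
    with hw
  have hagree : ∀ u, Occurs u φ → v u = cmk F L (w u) := by
    intro u hu
    have hu' : u ∈ Finset.range (maxVar φ + 1) := by
      simp [Nat.lt_succ_iff]; exact le_maxVar_of_occurs hu
    have hmL : m u ≤ L := Finset.le_sup hu'
    rw [hx u, hw]
    simp only [dif_pos hmL]
    rw [cmk_tr]
  rw [sat_congr φ hagree, sat_colim F hF]
  exact h L w

section Endo

variable (G : ∀ n, A n → A (n+1))

theorem tr_G_comm (comm : ∀ n x, F (n+1) (G n x) = G (n+1) (F n x))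
    {n m : ℕ} (h : n ≤ m) (x : A n) :
    G m (tr F h x) = tr F (Nat.succ_le_succ h) (G n x) := by
  induction m, h using Nat.le_induction with
  | base => rw [tr_self, tr_self]
  | succ m hm ih =>
      rw [tr_succ F hm]
      rw [← comm m (tr F hm x), ih]
      exact (tr_succ F (Nat.succ_le_succ hm) (G n x)).symm

/-- The endomorphism of the colimit induced by a morphism of the chain into its shift. -/
def clift (comm : ∀ n x, F (n+1) (G n x) = G (n+1) (F n x)) : Colim F → Colim F :=
  Quotient.lift (fun p => cmk F (p.1+1) (G p.1 p.2)) (by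
    rintro p q ⟨m, h1, h2, h⟩
    show cmk F (p.1+1) (G p.1 p.2) = cmk F (q.1+1) (G q.1 q.2)
    have e1 : cmk F (p.1+1) (G p.1 p.2) = cmk F (m+1) (G m (tr F h1 p.2)) := by
      rw [tr_G_comm F G comm h1, cmk_tr]
    have e2 : cmk F (q.1+1) (G q.1 q.2) = cmk F (m+1) (G m (tr F h2 q.2)) := by
      rw [tr_G_comm F G comm h2, cmk_tr]
    rw [e1, e2, h])

theorem clift_cmk (comm : ∀ n x, F (n+1) (G n x) = G (n+1) (F n x)) (n : ℕ) (x : A n) :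
    clift F G comm (cmk F n x) = cmk F (n+1) (G n x) := rfl

theorem clift_elem (hG : ∀ n, Elem (EA n) (EA (n+1)) (G n))
    (comm : ∀ n x, F (n+1) (G n x) = G (n+1) (F n x)) :
    Elem (cE F hF) (cE F hF) (clift F G comm) := by
  intro φ v
  classical
  choose m hm x hx using fun u => exists_rep_ge F (v u) 0
  set L := max (Finset.sup (Finset.range (maxVar φ + 1)) m) (m 0) with hL
  haveI : Nonempty (A L) := ⟨tr F (le_max_right _ _) (x 0)⟩
  set w : ℕ → A L := fun u => if h : m u ≤ L then tr F h (x u) else Classical.arbitrary _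
    with hw
  have hagree : ∀ u, Occurs u φ → v u = cmk F L (w u) := by
    intro u hu
    have hu' : u ∈ Finset.range (maxVar φ + 1) := by
      simp [Nat.lt_succ_iff]; exact le_maxVar_of_occurs hu
    have hmL : m u ≤ L := le_trans (Finset.le_sup hu') (le_max_left _ _)
    rw [hx u, hw]
    simp only [dif_pos hmL]
    rw [cmk_tr]
  have hagree2 : ∀ u, Occurs u φ →
      clift F G comm (v u) = cmk F (L+1) (G L (w u)) := by
    intro u hu
    rw [hagree u hu, clift_cmk]
  rw [sat_congr φ hagree2, sat_congr φ hagree, sat_colim F hF, sat_colim F hF]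
  exact hG L φ w

end Endo

end Colimit

/-! ### The base model: hereditarily finite sets coded on `ℕ` -/

/-- Ackermann membership on `ℕ`. -/
def E0 : ℕ → ℕ → Prop := fun a b => Nat.testBit b a = true

theorem E0_lt {a b : ℕ} (h : E0 a b) : a < b :=
  lt_of_lt_of_le Nat.lt_two_pow_self (Nat.ge_two_pow_of_testBit h)

theorem e0_ext {a b : ℕ} (h : ∀ c, E0 c a ↔ E0 c b) : a = b := by
  refine Nat.eq_of_testBit_eq fun i => ?_
  rw [Bool.eq_iff_iff]
  exact h i

theorem trueIn_E0_ext :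
    TrueIn ℕ E0 (.all 0 (.all 1 (.imp (.all 2 (Fml.iffF (.mem 2 0) (.mem 2 1))) (.eq 0 1)))) := by
  intro v
  simp only [Fml.Sat, Fml.iffF, Fml.andF]
  intro a b h
  refine e0_ext fun c => ?_
  have hc := h c
  simp only [Function.update] at hc ⊢
  simp at hc ⊢
  tauto

/-- Build a number with prescribed bits below a bound. -/
def ofFun (f : ℕ → Bool) : ℕ → ℕ
  | 0 => 0
  | n+1 => 2 * ofFun (fun i => f (i+1)) n + (f 0).toNat

theorem testBit_ofFun : ∀ (n : ℕ) (f : ℕ → Bool) (m : ℕ),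
    Nat.testBit (ofFun f n) m = (f m && decide (m < n)) := by
  intro n
  induction n with
  | zero => intro f m; simp [ofFun, Nat.zero_testBit]
  | succ n ih =>
      intro f m
      cases m with
      | zero =>
          rw [show ofFun f (n+1) = 2 * ofFun (fun i => f (i+1)) n + (f 0).toNat from rfl]
          rw [Nat.testBit_zero, Nat.mul_add_mod]
          cases hf : f 0 <;> simp
      | succ m =>
          rw [show ofFun f (n+1) = 2 * ofFun (fun i => f (i+1)) n + (f 0).toNat from rfl]
          rw [Nat.testBit_succ]
          have hdiv : (2 * ofFun (fun i => f (i+1)) n + (f 0).toNat) / 2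
              = ofFun (fun i => f (i+1)) n := by
            cases f 0 <;> simp <;> omega
          rw [hdiv, ih]
          simp [Nat.succ_lt_succ_iff]

/-- Separation holds in the base model for arbitrary predicates. -/
theorem e0_sep (y : ℕ) (p : ℕ → Prop) : ∃ s : ℕ, ∀ z, E0 z s ↔ (E0 z y ∧ p z) := by
  classical
  refine ⟨ofFun (fun m => Nat.testBit y m && decide (p m)) y, fun z => ?_⟩
  show Nat.testBit _ z = true ↔ _
  rw [testBit_ofFun]
  constructor
  · intro h
    simp only [Bool.and_eq_true, decide_eq_true_eq] at h
    exact ⟨h.1.1, h.1.2⟩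
  · rintro ⟨h1, h2⟩
    have := E0_lt h1
    simp only [Bool.and_eq_true, decide_eq_true_eq]
    exact ⟨⟨h1, h2⟩, this⟩

theorem lt_two_pow_of_bits : ∀ (c z : ℕ), (∀ m, Nat.testBit z m = true → m < c) → z < 2 ^ c := by
  intro c
  induction c with
  | zero =>
      intro z h
      have : z = 0 := Nat.eq_of_testBit_eq fun i => by
        rw [Nat.zero_testBit]
        by_contra hne
        exact absurd (h i (by simpa using hne)) (by omega)
      omega
  | succ c ih =>
      intro z h
      have h2 : z / 2 < 2 ^ c := by
        refine ih (z / 2) fun m hm => ?_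
        have := h (m+1) (by rwa [Nat.testBit_succ])
        omega
      have := Nat.div_add_mod z 2
      have hmod : z % 2 < 2 := Nat.mod_lt _ (by omega)
      have : z < 2 ^ (c+1) := by
        rw [pow_succ]
        omega
      exact this

/-- Cardinalities of the finite levels `V_i`. -/
def lvc : ℕ → ℕ := fun i => i.rec 0 (fun _ c => 2 ^ c)

theorem lvc_succ (i : ℕ) : lvc (i+1) = 2 ^ lvc i := rfl

theorem lvc_mono {i k : ℕ} (h : i ≤ k) : lvc i ≤ lvc k := by
  induction k, h using Nat.le_induction with
  | base => exact le_refl _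
  | succ k hk ih => exact le_trans ih (le_of_lt (by rw [lvc_succ]; exact Nat.lt_two_pow_self))

/-- The code of the finite level `V_i`. -/
def vcode (i : ℕ) : ℕ := 2 ^ lvc i - 1

theorem E0_vcode {z i : ℕ} : E0 z (vcode i) ↔ z < lvc i := by
  show Nat.testBit _ _ = true ↔ _
  rw [vcode, Nat.testBit_two_pow_sub_one]
  simp

/-- The key combinatorial fact: any subset of `V_{i+1}` belongs to `V_{k+1}` once `i+1 ≤ k`. -/
theorem vcode_key {i k : ℕ} (hik : i + 1 ≤ k) (z : ℕ)
    (hz : ∀ c, E0 c z → E0 c (vcode (i+1))) : E0 z (vcode (k+1)) := by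
  rw [E0_vcode]
  have h1 : z < 2 ^ lvc (i+1) := by
    refine lt_two_pow_of_bits _ _ fun m hm => ?_
    have := (E0_vcode).1 (hz m hm)
    exact this
  calc z < 2 ^ lvc (i+1) := h1
    _ = lvc (i+2) := (lvc_succ _).symm
    _ ≤ lvc (k+1) := lvc_mono (by omega)

theorem E0_zero_vcode (i : ℕ) : E0 0 (vcode (i+1)) := by
  rw [E0_vcode, lvc_succ]
  exact Nat.pow_pos (by omega)

/-! ### The tower of iterated ultrapowers and its colimits -/

theorem trueIn_ult {M : Type} {E : M → M → Prop} (φ : Fml) (h : TrueIn M E φ) :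
    TrueIn (Ult M) (uE E) φ := by
  intro v
  have hv : v = fun u => Ult.mk (Quotient.out (v u)) :=
    funext fun u => (Quotient.out_eq _).symm
  rw [hv, los]
  exact Filter.Eventually.of_forall fun i => h _

structure Struc where
  α : Type
  r : α → α → Prop

def Tow : ℕ → Struc := fun n => n.rec ⟨ℕ, E0⟩ (fun _ s => ⟨Ult s.α, uE s.r⟩)

abbrev TA (n : ℕ) : Type := (Tow n).α

abbrev TE (n : ℕ) : TA n → TA n → Prop := (Tow n).r

def towF (n : ℕ) : TA n → TA (n+1) := uEmb

theorem towF_elem : ∀ n, Elem (TE n) (TE (n+1)) (towF n) := fun _ => uEmb_elem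

def towG : (n : ℕ) → TA n → TA (n+1)
  | 0 => uEmb
  | n+1 => uMap (towG n)

theorem towG_elem : ∀ n, Elem (TE n) (TE (n+1)) (towG n) := by
  intro n
  induction n with
  | zero => exact uEmb_elem
  | succ n ih => exact uMap_elem ih

theorem towG_comm : ∀ (n : ℕ) (x : TA n), towF (n+1) (towG n x) = towG (n+1) (towF n x) :=
  fun n x => (uMap_uEmb (towG n) x).symm

/-- The colimit of the tower: a structure with an elementary self-embedding. -/
abbrev NN : Type := Colim towF

abbrev EN : NN → NN → Prop := cE towF towF_elem

abbrev iN (n : ℕ) (x : TA n) : NN := cmk towF n x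

/-- The elementary self-embedding of `NN`. -/
def J : NN → NN := clift towF towG towG_comm

theorem J_elem : Elem EN EN J := clift_elem towF towF_elem towG towG_elem towG_comm

theorem trueIn_NN (φ : Fml) (h : TrueIn ℕ E0 φ) : TrueIn NN EN φ := by
  refine trueIn_colim towF towF_elem ⟨(0 : ℕ)⟩ φ ?_
  intro n
  induction n with
  | zero => exact h
  | succ n ih => exact trueIn_ult φ ih

/-! ### The limit along `J`, and its shift automorphism -/

abbrev NFc : ℕ → Type := fun _ => NN

abbrev NEc : ∀ n, NFc n → NFc n → Prop := fun _ => EN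

def NF : ∀ n, NFc n → NFc (n+1) := fun _ => J

theorem hNF : ∀ n, Elem (NEc n) (NEc (n+1)) (NF n) := fun _ => J_elem

/-- The final underlying type: the limit of `NN` along `J`. -/
abbrev Nf : Type := Colim NF

abbrev Ef : Nf → Nf → Prop := cE NF hNF

abbrev iF (k : ℕ) (z : NN) : Nf := cmk NF k z

theorem id_elem : ∀ n, Elem (NEc n) (NEc (n+1)) (fun z => z) := fun _ _ _ => Iff.rfl

/-- The shift automorphism (forward direction). -/
def sg : Nf → Nf := clift NF (fun _ z => z) (fun _ _ => rfl)

theorem sg_elem : Elem Ef Ef sg := clift_elem NF hNF (fun _ z => z) id_elem (fun _ _ => rfl)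

theorem sg_iF (k : ℕ) (z : NN) : sg (iF k z) = iF (k+1) z :=
  clift_cmk NF (fun _ z => z) (fun _ _ => rfl) k z

theorem iF_succ_J (k : ℕ) (z : NN) : iF (k+1) (J z) = iF k z := by
  have h : tr NF (Nat.le_succ k) z = J z := by
    rw [tr_succ NF (le_refl k), tr_self]
    rfl
  rw [show iF (k+1) (J z) = cmk NF (k+1) (J z) from rfl, ← h, cmk_tr]

theorem tr_NF_J {n m : ℕ} (h : n ≤ m) (z : NN) : tr NF h (J z) = J (tr NF h z) := by
  induction m, h using Nat.le_induction with
  | base => rw [tr_self, tr_self]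
  | succ m hm ih =>
      rw [tr_succ NF hm, tr_succ NF hm (x := z), ih]
      rfl

/-- The shift automorphism (backward direction). -/
def tg : Nf → Nf :=
  Quotient.lift (fun p => cmk NF p.1 (J p.2)) (by
    rintro p q ⟨m, h1, h2, h⟩
    show cmk NF p.1 (J p.2) = cmk NF q.1 (J q.2)
    have e1 : cmk NF p.1 (J p.2) = cmk NF m (J (tr NF h1 p.2)) := by
      rw [← tr_NF_J h1, cmk_tr]
    have e2 : cmk NF q.1 (J q.2) = cmk NF m (J (tr NF h2 q.2)) := by
      rw [← tr_NF_J h2, cmk_tr]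
    rw [e1, e2, h])

theorem tg_iF (k : ℕ) (z : NN) : tg (iF k z) = iF k (J z) := rfl

theorem tg_sg (z : Nf) : tg (sg z) = z := by
  induction z using colim_ind with
  | h k x => rw [show cmk NF k x = iF k x from rfl, sg_iF, tg_iF, iF_succ_J]

theorem sg_tg (z : Nf) : sg (tg z) = z := by
  induction z using colim_ind with
  | h k x => rw [show cmk NF k x = iF k x from rfl, tg_iF, sg_iF, iF_succ_J]

/-- The shift as an equivalence. -/
def es : Nf ≃ Nf := ⟨sg, tg, tg_sg, sg_tg⟩

theorem trueIn_Nf (φ : Fml) (h : TrueIn ℕ E0 φ) : TrueIn Nf Ef φ := by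
  refine trueIn_colim NF hNF ?_ φ ?_
  · exact ⟨iN 0 (show TA 0 from (0 : ℕ))⟩
  · intro n; exact trueIn_NN φ h

/-! ### The distinguished element and the key inclusion -/

def gseq : ℕ → ℕ := fun i => vcode (i+1)

def Yu : TA 1 := Ult.mk gseq

def YN : NN := iN 1 Yu

/-- `Ŷ`, the universe-to-be. -/
def Yhat : Nf := iF 0 YN

/-- The formula `∀z (z ⊆ x₀ → z ∈ x₁)`. -/
def chi : Fml := .all 2 (.imp (.all 3 (.imp (.mem 3 2) (.mem 3 0))) (.mem 2 1))

theorem sat_chi {M : Type} {E : M → M → Prop} (v : ℕ → M) :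
    Sat M E chi v ↔ ∀ z, (∀ c, E c z → E c (v 0)) → E z (v 1) := by
  simp only [chi, Fml.Sat]
  constructor
  · intro h z hz
    have := h z
    simp only [Function.update] at this
    simp at this
    exact this (by intro c hc; simpa using hz c (by simpa using hc))
  · intro h z
    simp only [Function.update]
    simp
    intro hz
    exact h z (by intro c hc; have := hz c; simpa using this hc)

theorem key_NN : ∀ z : NN, (∀ c, EN c z → EN c (J YN)) → EN z YN := by
  have hsat : Sat NN EN chi (fun u => if u = 0 then J YN else YN) := by
    have hJ : J YN = iN 2 (towG 1 Yu) := rfl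
    have hY2 : YN = iN 2 (towF 1 Yu) := by
      rw [show iN 2 (towF 1 Yu) = cmk towF 2 (towF 1 Yu) from rfl]
      rw [show (towF 1 Yu : TA 2) = tr towF (Nat.le_succ 1) Yu by
        rw [tr_succ towF (le_refl 1), tr_self]]
      rw [cmk_tr]
      rfl
    have e : (fun u => if u = 0 then J YN else YN)
        = fun u => cmk towF 2 ((fun u => if u = 0 then towG 1 Yu else towF 1 Yu) u) := by
      funext u
      by_cases hu : u = 0
      · simp [hu, hJ]
      · simp [hu]; rw [hY2]
    rw [e, sat_colim towF towF_elem]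
    -- now at level 2 = Ult (Ult ℕ)
    have e2 : (fun u => if u = 0 then towG 1 Yu else towF 1 Yu)
        = fun u => Ult.mk ((fun u => if u = 0 then (uEmb ∘ gseq) else (fun _ => Yu)) u) := by
      funext u
      by_cases hu : u = 0 <;> simp [hu] <;> rfl
    rw [e2]
    rw [show (Sat (TA 2) (TE 2)) = Sat (Ult (TA 1)) (uE (TE 1)) from rfl]
    erw [los]
    refine Filter.Eventually.of_forall fun i => ?_
    have e3 : (fun u => (fun u => if u = 0 then (uEmb ∘ gseq) else (fun _ => Yu)) u i)
        = fun u => Ult.mk ((fun u => if u = 0 then (fun _ => gseq i) else gseq) u) := by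
      funext u
      by_cases hu : u = 0 <;> simp [hu] <;> rfl
    rw [e3]
    rw [show (Sat (TA 1) (TE 1)) = Sat (Ult ℕ) (uE E0) from rfl]
    rw [los]
    have hcof : ∀ᶠ k in Filter.cofinite, i + 1 ≤ k := by
      rw [Filter.eventually_cofinite]
      apply Set.Finite.subset (Set.finite_Iio (i+1))
      intro k hk
      simp at hk ⊢
      omega
    refine (U_cofinite hcof).mono fun k hk => ?_
    rw [sat_chi]
    intro z hz
    show E0 z (gseq k)
    refine vcode_key hk z ?_
    intro c hc
    exact hz c hc
  rw [sat_chi] at hsat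
  intro z hz
  have := hsat z
  simp only [if_pos rfl] at this
  refine (fun h => by simpa using this h) ?_
  intro c hc
  simpa using hz c hc

/-- The key inclusion in `Nf`: the power set of `Ŷ` is contained in `σŶ`. -/
theorem key_Nf : ∀ z : Nf, (∀ c, Ef c z → Ef c Yhat) → Ef z (sg Yhat) := by
  have hsat : Sat Nf Ef chi (fun u => if u = 0 then Yhat else sg Yhat) := by
    have e : (fun u => if u = 0 then Yhat else sg Yhat)
        = fun u => cmk NF 1 ((fun u => if u = 0 then J YN else YN) u) := by
      funext u
      by_cases hu : u = 0
      · simp [hu]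
        rw [show Yhat = iF 0 YN from rfl, ← iF_succ_J 0 YN]
      · simp [hu]
        rw [show Yhat = iF 0 YN from rfl, sg_iF]
    rw [e, sat_colim NF hNF, sat_chi]
    simpa using key_NN
  rw [sat_chi] at hsat
  intro z hz
  have := hsat z
  simp only [if_pos rfl] at this
  refine (fun h => by simpa using this h) ?_
  intro c hc
  simpa using hz c hc

theorem nonempty_Yhat : ∃ z : Nf, Ef z Yhat := by
  refine ⟨iF 0 (iN 1 (uEmb 0)), ?_⟩
  show cE NF hNF (cmk NF 0 (iN 1 (uEmb 0))) (cmk NF 0 YN)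
  rw [cE_cmk]
  show cE towF towF_elem (cmk towF 1 (uEmb 0)) (cmk towF 1 Yu)
  erw [cE_cmk]
  show uE E0 (Ult.mk (fun _ => 0)) (Ult.mk gseq)
  rw [uE_mk]
  exact Filter.Eventually.of_forall fun i => E0_zero_vcode i

/-! ### The final model and the transport kit -/

/-- The domain of the NFU model: the extension of `Ŷ`. -/
def MT : Type := {a : Nf // Ef a Yhat}

/-- Membership in the NFU model. -/
def EM : MT → MT → Prop := fun a b =>
  (∀ c, Ef c (sg b.val) → Ef c Yhat) ∧ Ef a.val (sg b.val)

theorem sg_mem (a b : Nf) : Ef (sg a) (sg b) ↔ Ef a b := sg_elem.mem_iff a b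

theorem tg_mem (a b : Nf) : Ef (tg a) (tg b) ↔ Ef a b := by
  rw [← sg_mem (tg a) (tg b), sg_tg, sg_tg]

theorem sg_iter_mem (k : ℕ) (a b : Nf) : Ef (sg^[k] a) (sg^[k] b) ↔ Ef a b := by
  induction k generalizing a b with
  | zero => rfl
  | succ k ih => simp only [Function.iterate_succ_apply']; rw [sg_mem, ih]

theorem tg_iter_mem (k : ℕ) (a b : Nf) : Ef (tg^[k] a) (tg^[k] b) ↔ Ef a b := by
  induction k generalizing a b with
  | zero => rfl
  | succ k ih => simp only [Function.iterate_succ_apply']; rw [tg_mem, ih]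

theorem sg_iter_tg_iter (k : ℕ) (a : Nf) : sg^[k] (tg^[k] a) = a :=
  (Function.LeftInverse.iterate sg_tg k) a

theorem tg_iter_sg_iter (k : ℕ) (a : Nf) : tg^[k] (sg^[k] a) = a :=
  (Function.LeftInverse.iterate tg_sg k) a

theorem sg_iter_inj (k : ℕ) : Function.Injective (sg^[k] : Nf → Nf) :=
  Function.LeftInverse.injective (Function.LeftInverse.iterate tg_sg k)

theorem sg_extSub (a b : Nf) :
    (∀ c, Ef c (sg a) → Ef c (sg b)) ↔ (∀ c, Ef c a → Ef c b) := by
  constructor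
  · intro h c hc
    have := h (sg c) ((sg_mem c a).2 hc)
    exact (sg_mem c b).1 this
  · intro h c hc
    have h1 : Ef (tg c) a := by
      have := (sg_mem (tg c) a).1
      rw [sg_tg] at this
      exact this hc
    have h2 : Ef (tg c) b := h _ h1
    have := (sg_mem (tg c) b).2 h2
    rwa [sg_tg] at this

theorem sg_iter_extSub (k : ℕ) (a b : Nf) :
    (∀ c, Ef c (sg^[k] a) → Ef c (sg^[k] b)) ↔ (∀ c, Ef c a → Ef c b) := by
  induction k generalizing a b with
  | zero => rfl
  | succ k ih =>
      rw [Function.iterate_succ_apply', Function.iterate_succ_apply', sg_extSub, ih]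

/-- The iterated images of `Ŷ` (the typed "universes"). -/
def Yt (t : ℕ) : Nf := sg^[t] Yhat

theorem P1 : ∀ t, ∀ z : Nf, (∀ c, Ef c z → Ef c (Yt t)) → Ef z (Yt (t+1)) := by
  intro t
  induction t with
  | zero =>
      intro z hz
      have := key_Nf z hz
      rwa [show Yt 1 = sg Yhat by simp [Yt]]
  | succ t ih =>
      intro z hz
      have hz' : ∀ c, Ef c (tg z) → Ef c (Yt t) := by
        have h1 : ∀ c, Ef c (sg (tg z)) → Ef c (sg (Yt t)) := by
          rw [sg_tg]
          intro c hc
          have := hz c hc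
          rwa [show Yt (t+1) = sg (Yt t) by simp [Yt, Function.iterate_succ_apply']] at this
        exact (sg_extSub _ _).1 h1
      have := ih (tg z) hz'
      have h2 := (sg_mem (tg z) (Yt (t+1))).2 this
      rwa [sg_tg, ← show Yt (t+2) = sg (Yt (t+1)) by simp [Yt, Function.iterate_succ_apply']] at h2

theorem sat_sg_iter (k : ℕ) (φ : Fml) (v : ℕ → Nf) :
    Sat Nf Ef φ (fun u => sg^[k] (v u)) ↔ Sat Nf Ef φ v := by
  induction k generalizing v with
  | zero => rfl
  | succ k ih =>
      have e : (fun u => sg^[k+1] (v u)) = fun u => sg (sg^[k] (v u)) := by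
        funext u; rw [Function.iterate_succ_apply']
      rw [e]
      exact (sg_elem φ (fun u => sg^[k] (v u))).trans (ih v)

/-- Extensionality in `Nf`. -/
theorem ext_Nf : ∀ a b : Nf, (∀ c, Ef c a ↔ Ef c b) → a = b := by
  have h := trueIn_Nf _ trueIn_E0_ext
  intro a b hab
  have h2 := h (fun _ => a) a b
  simp only [Fml.Sat, Fml.iffF, Fml.andF] at h2
  simp only [Function.update] at h2
  simp at h2
  exact h2 fun c => ⟨(hab c).1, (hab c).2⟩

/-! ### The syntactic relativization -/

/-- Relativize a stratified formula to the typed universes. -/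
def relF (base : ℕ) (τ : ℕ → ℕ) : Fml → Fml
  | .eq u w => .eq u w
  | .mem u w => .andF (.all base (.imp (.mem base w) (.mem base (base + 2 + τ u)))) (.mem u w)
  | .not θ => .not (relF base τ θ)
  | .imp θ1 θ2 => .imp (relF base τ θ1) (relF base τ θ2)
  | .all u θ => .all u (.imp (.mem u (base + 2 + τ u)) (relF base τ θ))

theorem occurs_relF {base : ℕ} {τ : ℕ → ℕ} :
    ∀ {θ : Fml} {p : ℕ}, Occurs p (relF base τ θ) →
      Occurs p θ ∨ p = base ∨ base + 2 ≤ p := by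
  intro θ
  induction θ with
  | eq u w => intro p h; exact Or.inl h
  | mem u w =>
      intro p h
      simp only [relF, Fml.andF, Fml.Occurs] at h ⊢
      omega
  | not θ ih => intro p h; exact ih h
  | imp θ1 θ2 ih1 ih2 =>
      intro p h
      rcases h with h | h
      · rcases ih1 h with h | h
        · exact Or.inl (Or.inl h)
        · exact Or.inr h
      · rcases ih2 h with h | h
        · exact Or.inl (Or.inr h)
        · exact Or.inr h
  | all u θ ih =>
      intro p h
      rcases h with h | ((h | h) | h)
      · exact Or.inl (Or.inl h)
      · exact Or.inl (Or.inl h)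
      · exact Or.inr (Or.inr (by omega))
      · rcases ih h with h | h
        · exact Or.inl (Or.inr h)
        · exact Or.inr h

/-- Stratification with natural-number types. -/
def NatStrat (τ : ℕ → ℕ) : Fml → Prop
  | .eq u w => τ u = τ w
  | .mem u w => τ w = τ u + 1
  | .not θ => NatStrat τ θ
  | .imp θ1 θ2 => NatStrat τ θ1 ∧ NatStrat τ θ2
  | .all _ θ => NatStrat τ θ

/-- The typed valuation corresponding to a model valuation. -/
def Wval (base : ℕ) (τ : ℕ → ℕ) (v : ℕ → MT) : ℕ → Nf := fun u =>
  if base + 2 ≤ u then Yt (u - (base + 2)) else sg^[τ u] (v u).val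

theorem Wval_yv (base : ℕ) (τ : ℕ → ℕ) (v : ℕ → MT) (s : ℕ) :
    Wval base τ v (base + 2 + s) = Yt s := by
  simp [Wval]

theorem Wval_lt (base : ℕ) (τ : ℕ → ℕ) (v : ℕ → MT) {u : ℕ} (h : u < base + 2) :
    Wval base τ v u = sg^[τ u] (v u).val := by
  simp [Wval]; omega

theorem Wval_update (base : ℕ) (τ : ℕ → ℕ) (v : ℕ → MT) {u : ℕ} (h : u < base + 2) (a : MT) :
    Wval base τ (Function.update v u a) =
      Function.update (Wval base τ v) u (sg^[τ u] a.val) := by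
  funext p
  by_cases hp : p = u
  · subst hp
    rw [Function.update_self, Wval_lt _ _ _ h, Function.update_self]
  · rw [Function.update_of_ne hp]
    simp only [Wval]
    rw [Function.update_of_ne hp]

/-- The main semantic equivalence: satisfaction in the NFU model versus satisfaction of the
relativization in `Nf`. -/
theorem main_equiv : ∀ (θ : Fml) (base : ℕ) (τ : ℕ → ℕ), NatStrat τ θ →
    (∀ u, Occurs u θ → u < base) → ∀ v : ℕ → MT,
      Sat MT EM θ v ↔ Sat Nf Ef (relF base τ θ) (Wval base τ v) := by
  intro θ
  induction θ with
  | eq u w =>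
      intro base τ hNS hocc v
      have hu : u < base := hocc u (Or.inl rfl)
      have hw : w < base := hocc w (Or.inr rfl)
      have ht : τ u = τ w := hNS
      show v u = v w ↔ Wval base τ v u = Wval base τ v w
      rw [Wval_lt _ _ _ (by omega), Wval_lt _ _ _ (by omega), ht]
      constructor
      · intro h; rw [h]
      · intro h
        exact Subtype.ext (sg_iter_inj (τ w) (by
          have : sg^[τ w] (v u).val = sg^[τ w] (v w).val := by rw [← ht] at h ⊢; exact h
          exact this))
  | mem u w =>
      intro base τ hNS hocc v
      have hu : u < base := hocc u (Or.inl rfl)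
      have hw : w < base := hocc w (Or.inr rfl)
      have ht : τ w = τ u + 1 := hNS
      show EM (v u) (v w) ↔ _
      rw [show relF base τ (.mem u w) = .andF (.all base (.imp (.mem base w)
        (.mem base (base + 2 + τ u)))) (.mem u w) from rfl, Fml.sat_andF]
      have hWu : Wval base τ v u = sg^[τ u] (v u).val := Wval_lt _ _ _ (by omega)
      have hWw : Wval base τ v w = sg^[τ u] (sg (v w).val) := by
        rw [Wval_lt _ _ _ (by omega), ht, Function.iterate_succ_apply]
      constructor
      · rintro ⟨h1, h2⟩
        constructor
        · -- the bounding conjunct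
          intro z
          have e2 : Function.update (Wval base τ v) base z w = Wval base τ v w :=
            Function.update_of_ne (by omega) _ _
          have e3 : Function.update (Wval base τ v) base z (base + 2 + τ u)
              = Yt (τ u) := by
            rw [Function.update_of_ne (by omega), Wval_yv]
          show Ef _ _ → Ef _ _
          rw [Function.update_self, e2, e3, hWw]
          intro hz
          have := (sg_iter_extSub (τ u) (sg (v w).val) Yhat).2 h1
          exact this z hz
        · show Ef (Wval base τ v u) (Wval base τ v w)
          rw [hWu, hWw, sg_iter_mem]
          exact h2
      · rintro ⟨h1, h2⟩
        constructor
        · intro c hc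
          have h1' := h1 (sg^[τ u] c)
          simp only [Fml.Sat] at h1'
          rw [Function.update_self, Function.update_of_ne (show w ≠ base by omega),
            Function.update_of_ne (show base + 2 + τ u ≠ base by omega), Wval_yv, hWw] at h1'
          have := h1' ((sg_iter_mem (τ u) c (sg (v w).val)).2 hc)
          exact (sg_iter_mem (τ u) c Yhat).1 (by rwa [show Yt (τ u) = sg^[τ u] Yhat from rfl] at this)
        · show Ef (v u).val (sg (v w).val)
          have : Ef (Wval base τ v u) (Wval base τ v w) := h2
          rwa [hWu, hWw, sg_iter_mem] at this
  | not θ ih =>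
      intro base τ hNS hocc v
      show ¬ _ ↔ ¬ _
      rw [ih base τ hNS hocc v]
  | imp θ1 θ2 ih1 ih2 =>
      intro base τ hNS hocc v
      show (_ → _) ↔ (_ → _)
      rw [ih1 base τ hNS.1 (fun u hu => hocc u (Or.inl hu)) v,
        ih2 base τ hNS.2 (fun u hu => hocc u (Or.inr hu)) v]
  | all u θ ih =>
      intro base τ hNS hocc v
      have hu : u < base := hocc u (Or.inl rfl)
      have hocc' : ∀ p, Occurs p θ → p < base := fun p hp => hocc p (Or.inr hp)
      show (∀ a : MT, _) ↔ (∀ b : Nf, _)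
      constructor
      · intro H b
        show Ef _ _ → _
        rw [Function.update_self, Function.update_of_ne (show base + 2 + τ u ≠ u by omega),
          Wval_yv]
        intro hb
        have hbY : Ef (tg^[τ u] b) Yhat := by
          have := (tg_iter_mem (τ u) b (Yt (τ u))).2 hb
          rwa [show Yt (τ u) = sg^[τ u] Yhat from rfl, tg_iter_sg_iter] at this
        have h := H ⟨tg^[τ u] b, hbY⟩
        rw [ih base τ hNS hocc' _] at h
        erw [Wval_update base τ v (u := u) (by omega)] at h
        have e : ((⟨tg^[τ u] b, hbY⟩ : MT)).val = tg^[τ u] b := rfl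
        rw [e, sg_iter_tg_iter] at h
        exact h
      · intro H a
        rw [ih base τ hNS hocc' _, Wval_update base τ v (by omega)]
        have h' := H (sg^[τ u] a.val)
        simp only [Fml.Sat] at h'
        refine h' ?_
        show Ef _ _
        rw [Function.update_self, Function.update_of_ne (show base + 2 + τ u ≠ u by omega),
          Wval_yv]
        rw [show Yt (τ u) = sg^[τ u] Yhat from rfl, sg_iter_mem]
        exact a.2
/-- Jensen's set theory NFU is consistent: there is a nonempty structure
`(M, E)` for the language with one binary relation symbol `∈` in which the
weak extensionality axiom and the universal closure of every instance
`∃A ∀x (x ∈ A ↔ φ)` of stratified comprehension (with `φ` stratified and `A` not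
occurring in `φ`) are true; that is, NFU is satisfiable. -/
theorem NFU_consistent :
    ∃ (M : Type) (E : M → M → Prop), Nonempty M ∧
      TrueIn M E weakExtAxiom ∧
      (∀ (φ : Fml) (x A : ℕ), Fml.Stratified φ → ¬ Fml.Occurs A φ → A ≠ x →
        TrueIn M E (comprehension x A φ)) := by
  classical
  refine ⟨MT, EM, ?_, ?_, ?_⟩
  · obtain ⟨z, hz⟩ := nonempty_Yhat
    exact ⟨⟨z, hz⟩⟩
  · -- weak extensionality
    intro v
    intro xx yy zz hzx
    have hzx' : EM zz xx := by
      have hzx0 : EM ((Function.update (Function.update (Function.update v 0 xx) 1 yy) 2 zz) 2)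
          ((Function.update (Function.update (Function.update v 0 xx) 1 yy) 2 zz) 0) := hzx
      have e2 : (Function.update (Function.update (Function.update v 0 xx) 1 yy) 2 zz) 2
          = zz := Function.update_self _ _ _
      have e0 : (Function.update (Function.update (Function.update v 0 xx) 1 yy) 2 zz) 0
          = xx := by
        rw [Function.update_of_ne (by omega : (0:ℕ) ≠ 2),
          Function.update_of_ne (by omega : (0:ℕ) ≠ 1), Function.update_self]
      rwa [e2, e0] at hzx0
    rw [Fml.sat_iffF]
    have hiff : ∀ b : MT, Sat MT EM (Fml.iffF (.mem 3 0) (.mem 3 1))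
        (Function.update (Function.update (Function.update (Function.update v 0 xx) 1 yy)
          2 zz) 3 b) ↔ (EM b xx ↔ EM b yy) := by
      intro b
      rw [Fml.sat_iffF]
      have e3 : (Function.update (Function.update (Function.update (Function.update v 0 xx)
          1 yy) 2 zz) 3 b) 3 = b := Function.update_self _ _ _
      have e0 : (Function.update (Function.update (Function.update (Function.update v 0 xx)
          1 yy) 2 zz) 3 b) 0 = xx := by
        rw [Function.update_of_ne (by omega : (0:ℕ) ≠ 3),
          Function.update_of_ne (by omega : (0:ℕ) ≠ 2),
          Function.update_of_ne (by omega : (0:ℕ) ≠ 1), Function.update_self]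
      have e1 : (Function.update (Function.update (Function.update (Function.update v 0 xx)
          1 yy) 2 zz) 3 b) 1 = yy := by
        rw [Function.update_of_ne (by omega : (1:ℕ) ≠ 3),
          Function.update_of_ne (by omega : (1:ℕ) ≠ 2), Function.update_self]
      show (EM _ _ ↔ EM _ _) ↔ _
      rw [e3, e0, e1]
    have heq : Sat MT EM (.eq 0 1) (Function.update (Function.update (Function.update v 0 xx)
        1 yy) 2 zz) ↔ xx = yy := by
      show _ = _ ↔ _
      have e0 : (Function.update (Function.update (Function.update v 0 xx) 1 yy) 2 zz) 0
          = xx := by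
        rw [Function.update_of_ne (by omega : (0:ℕ) ≠ 2),
          Function.update_of_ne (by omega : (0:ℕ) ≠ 1), Function.update_self]
      have e1 : (Function.update (Function.update (Function.update v 0 xx) 1 yy) 2 zz) 1
          = yy := by
        rw [Function.update_of_ne (by omega : (1:ℕ) ≠ 2), Function.update_self]
      rw [e0, e1]
    rw [heq]
    constructor
    · rintro rfl
      intro b
      rw [hiff b]
    · intro h
      have hext : ∀ b : MT, EM b xx ↔ EM b yy := fun b => (hiff b).1 (h b)
      obtain ⟨hsx, hzx2⟩ := hzx'
      by_cases hy : ∀ c, Ef c (sg yy.val) → Ef c Yhat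
      · have hval : sg xx.val = sg yy.val := by
          apply ext_Nf
          intro c
          constructor
          · intro hc
            exact ((hext ⟨c, hsx c hc⟩).1 ⟨hsx, hc⟩).2
          · intro hc
            exact ((hext ⟨c, hy c hc⟩).2 ⟨hy, hc⟩).2
        have hval' : xx.val = yy.val := by
          have := congrArg tg hval
          rwa [tg_sg, tg_sg] at this
        exact Subtype.ext hval'
      · exfalso
        exact hy ((hext zz).1 ⟨hsx, hzx2⟩).1
  · -- stratified comprehension
    rintro φ x A ⟨σ0, hσ⟩ hA hAx
    intro v
    set base := maxVar φ + x + A + 1 with hbase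
    have hAb : A < base := by omega
    have hxb : x < base := by omega
    have hne : ((Finset.range (maxVar φ + 1)).image σ0).Nonempty := by
      refine ⟨σ0 0, ?_⟩
      simp only [Finset.mem_image]
      exact ⟨0, by simp, rfl⟩
    set mn : ℤ := min (σ0 x) (((Finset.range (maxVar φ + 1)).image σ0).min' hne) with hmn
    have hmn_le : ∀ u, Occurs u φ → mn ≤ σ0 u := by
      intro u hu
      have h1 : u ∈ Finset.range (maxVar φ + 1) := by
        simp only [Finset.mem_range, Nat.lt_succ_iff]
        exact le_maxVar_of_occurs hu
      exact le_trans (min_le_right _ _) (Finset.min'_le _ _ (Finset.mem_image_of_mem _ h1))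
    have hmnx : mn ≤ σ0 x := min_le_left _ _
    set τ : ℕ → ℕ := fun u => (σ0 u - mn).toNat with hτ
    have hNS : ∀ θ : Fml, StratifiedBy σ0 θ → (∀ u, Occurs u θ → mn ≤ σ0 u) →
        NatStrat τ θ := by
      intro θ
      induction θ with
      | eq u w =>
          intro h1 h2
          have hu := h2 u (Or.inl rfl)
          have h1' : σ0 u = σ0 w := h1
          show (σ0 u - mn).toNat = (σ0 w - mn).toNat
          omega
      | mem u w =>
          intro h1 h2
          have hu := h2 u (Or.inl rfl)
          have h1' : σ0 u + 1 = σ0 w := h1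
          show (σ0 w - mn).toNat = (σ0 u - mn).toNat + 1
          omega
      | not θ ih => intro h1 h2; exact ih h1 h2
      | imp θ1 θ2 ih1 ih2 =>
          intro h1 h2
          exact ⟨ih1 h1.1 (fun u hu => h2 u (Or.inl hu)),
            ih2 h1.2 (fun u hu => h2 u (Or.inr hu))⟩
      | all u θ ih => intro h1 h2; exact ih h1 (fun p hp => h2 p (Or.inr hp))
    have hNSφ : NatStrat τ φ := hNS φ hσ hmn_le
    have hocc : ∀ u, Occurs u φ → u < base := fun u hu => by
      have := le_maxVar_of_occurs hu; omega
    set t := τ x with htdef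
    set Φ := relF base τ φ with hΦ
    have hAΦ : ¬ Occurs A Φ := by
      intro hAo
      rcases occurs_relF hAo with h | h | h
      · exact hA h
      · omega
      · omega
    set hypF : Fml := .all (base+1) (.imp (.all base (.imp (.mem base (base+1))
      (.mem base (base+2+t)))) (.mem (base+1) (base+2+(t+1)))) with hhypF
    set bodyF : Fml := .exF A (.andF (.mem A (base+2+(t+1))) (.andF
      (.all base (.imp (.mem base A) (.mem base (base+2+t))))
      (.all x (.imp (.mem x (base+2+t)) (.iffF (.mem x A) Φ))))) with hbodyF
    -- Step 1: the transfer sentence holds in the base model, by separation.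
    have hΨ0 : TrueIn ℕ E0 (.imp hypF bodyF) := by
      intro w
      show Sat ℕ E0 hypF w → Sat ℕ E0 bodyF w
      intro hhyp
      rw [hbodyF, Fml.sat_exF]
      obtain ⟨s, hs⟩ := e0_sep (w (base+2+t)) (fun a => Sat ℕ E0 Φ (Function.update w x a))
      refine ⟨s, ?_⟩
      rw [Fml.sat_andF]
      constructor
      · show E0 _ _
        have eA : (Function.update w A s) A = s := Function.update_self _ _ _
        have eY : (Function.update w A s) (base+2+(t+1)) = w (base+2+(t+1)) :=
          Function.update_of_ne (by omega) _ _
        rw [eA, eY]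
        have h1 := hhyp s
        show E0 s (w (base+2+(t+1)))
        have h1' : (∀ c, E0 c s → E0 c (w (base+2+t))) → E0 s (w (base+2+(t+1))) := by
          intro hc
          have h2 := h1 ?_
          · have eb : (Function.update w (base+1) s) (base+1) = s :=
              Function.update_self _ _ _
            have eY2 : (Function.update w (base+1) s) (base+2+(t+1)) = w (base+2+(t+1)) :=
              Function.update_of_ne (by omega) _ _
            have h2' : E0 ((Function.update w (base+1) s) (base+1))
                ((Function.update w (base+1) s) (base+2+(t+1))) := h2
            rw [eb, eY2] at h2'
            exact h2'
          · intro c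
            show E0 _ _ → E0 _ _
            have e1 : (Function.update (Function.update w (base+1) s) base c) base = c :=
              Function.update_self _ _ _
            have e2 : (Function.update (Function.update w (base+1) s) base c) (base+1)
                = s := by
              rw [Function.update_of_ne (by omega : base+1 ≠ base), Function.update_self]
            have e3 : (Function.update (Function.update w (base+1) s) base c) (base+2+t)
                = w (base+2+t) := by
              rw [Function.update_of_ne (by omega : base+2+t ≠ base),
                Function.update_of_ne (by omega : base+2+t ≠ base+1)]
            rw [e1, e2, e3]
            exact hc c
        refine h1' ?_
        intro c hc
        exact ((hs c).1 hc).1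
      rw [Fml.sat_andF]
      constructor
      · intro z
        show E0 _ _ → E0 _ _
        have e1 : (Function.update (Function.update w A s) base z) base = z :=
          Function.update_self _ _ _
        have e2 : (Function.update (Function.update w A s) base z) A = s := by
          rw [Function.update_of_ne (by omega : A ≠ base), Function.update_self]
        have e3 : (Function.update (Function.update w A s) base z) (base+2+t)
            = w (base+2+t) := by
          rw [Function.update_of_ne (by omega : base+2+t ≠ base),
            Function.update_of_ne (by omega : base+2+t ≠ A)]
        rw [e1, e2, e3]
        intro hz
        exact ((hs z).1 hz).1
      · intro b hb0
        have eb : (Function.update (Function.update w A s) x b) x = b :=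
          Function.update_self _ _ _
        have eY : (Function.update (Function.update w A s) x b) (base+2+t)
            = w (base+2+t) := by
          rw [Function.update_of_ne (by omega : base+2+t ≠ x),
            Function.update_of_ne (by omega : base+2+t ≠ A)]
        have hb : E0 b (w (base+2+t)) := by
          have hb1 : E0 ((Function.update (Function.update w A s) x b) x)
              ((Function.update (Function.update w A s) x b) (base+2+t)) := hb0
          rwa [eb, eY] at hb1
        rw [Fml.sat_iffF]
        have eA : (Function.update (Function.update w A s) x b) A = s := by
          rw [Function.update_of_ne hAx, Function.update_self]
        have hL : Sat ℕ E0 (.mem x A) (Function.update (Function.update w A s) x b)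
            ↔ E0 b s := by
          show E0 _ _ ↔ _
          rw [eb, eA]
        rw [hL]
        have hcong : Sat ℕ E0 Φ (Function.update (Function.update w A s) x b)
            ↔ Sat ℕ E0 Φ (Function.update w x b) := by
          refine sat_congr Φ ?_
          intro p hp
          have hpA : p ≠ A := fun e => hAΦ (e ▸ hp)
          by_cases hpx : p = x
          · subst hpx; rw [Function.update_self, Function.update_self]
          · rw [Function.update_of_ne hpx, Function.update_of_ne hpx,
              Function.update_of_ne hpA]
        rw [hcong]
        constructor
        · intro hbs
          exact ((hs b).1 hbs).2
        · intro hΦb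
          exact (hs b).2 ⟨hb, hΦb⟩
    -- Step 2: transfer to `Nf`.
    have hΨf := trueIn_Nf _ hΨ0
    have hsat := hΨf (Wval base τ v)
    have hP1sat : Sat Nf Ef hypF (Wval base τ v) := by
      intro z
      show Sat Nf Ef (.imp _ _) _
      simp only [Fml.Sat]
      intro hz
      have e1 : (Function.update (Wval base τ v) (base+1) z) (base+1) = z :=
        Function.update_self _ _ _
      have e2 : (Function.update (Wval base τ v) (base+1) z) (base+2+(t+1))
          = Yt (t+1) := by
        rw [Function.update_of_ne (by omega : base+2+(t+1) ≠ base+1), Wval_yv]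
      rw [e1, e2]
      refine P1 t z ?_
      intro c hc
      have h2 := hz c
      have f1 : (Function.update (Function.update (Wval base τ v) (base+1) z) base c) base
          = c := Function.update_self _ _ _
      have f2 : (Function.update (Function.update (Wval base τ v) (base+1) z) base c)
          (base+1) = z := by
        rw [Function.update_of_ne (by omega : base+1 ≠ base), Function.update_self]
      have f3 : (Function.update (Function.update (Wval base τ v) (base+1) z) base c)
          (base+2+t) = Yt t := by
        rw [Function.update_of_ne (by omega : base+2+t ≠ base),
          Function.update_of_ne (by omega : base+2+t ≠ base+1), Wval_yv]
      rw [f1, f2, f3] at h2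
      exact h2 hc
    have hbody : Sat Nf Ef bodyF (Wval base τ v) := hsat hP1sat
    rw [hbodyF, Fml.sat_exF] at hbody
    obtain ⟨A', hA'⟩ := hbody
    rw [Fml.sat_andF] at hA'
    obtain ⟨hA1, hA'⟩ := hA'
    rw [Fml.sat_andF] at hA'
    obtain ⟨hA2, hA3⟩ := hA'
    have hA1' : Ef A' (Yt (t+1)) := by
      have e1 : (Function.update (Wval base τ v) A A') A = A' := Function.update_self _ _ _
      have e2 : (Function.update (Wval base τ v) A A') (base+2+(t+1)) = Yt (t+1) := by
        rw [Function.update_of_ne (by omega : base+2+(t+1) ≠ A), Wval_yv]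
      have := hA1
      rw [show Sat Nf Ef (.mem A (base+2+(t+1))) (Function.update (Wval base τ v) A A')
        = Ef ((Function.update (Wval base τ v) A A') A)
          ((Function.update (Wval base τ v) A A') (base+2+(t+1))) from rfl, e1, e2] at this
      exact this
    have hA2' : ∀ z, Ef z A' → Ef z (Yt t) := by
      intro z
      have h2 := hA2 z
      show Ef z A' → Ef z (Yt t)
      have e1 : (Function.update (Function.update (Wval base τ v) A A') base z) base = z :=
        Function.update_self _ _ _
      have e2 : (Function.update (Function.update (Wval base τ v) A A') base z) A = A' := by
        rw [Function.update_of_ne (by omega : A ≠ base), Function.update_self]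
      have e3 : (Function.update (Function.update (Wval base τ v) A A') base z) (base+2+t)
          = Yt t := by
        rw [Function.update_of_ne (by omega : base+2+t ≠ base),
          Function.update_of_ne (by omega : base+2+t ≠ A), Wval_yv]
      simp only [Fml.Sat] at h2
      rw [e1, e2, e3] at h2
      exact h2
    have hA3' : ∀ b, Ef b (Yt t) → (Ef b A' ↔
        Sat Nf Ef Φ (Function.update (Function.update (Wval base τ v) A A') x b)) := by
      intro b hb
      have e1 : (Function.update (Function.update (Wval base τ v) A A') x b) x = b :=
        Function.update_self _ _ _
      have e2 : (Function.update (Function.update (Wval base τ v) A A') x b) (base+2+t)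
          = Yt t := by
        rw [Function.update_of_ne (by omega : base+2+t ≠ x),
          Function.update_of_ne (by omega : base+2+t ≠ A), Wval_yv]
      have e3 : (Function.update (Function.update (Wval base τ v) A A') x b) A = A' := by
        rw [Function.update_of_ne hAx, Function.update_self]
      have hbsat : Sat Nf Ef (.mem x (base+2+t))
          (Function.update (Function.update (Wval base τ v) A A') x b) := by
        show Ef _ _
        rw [e1, e2]
        exact hb
      have h4 := hA3 b hbsat
      rw [Fml.sat_iffF] at h4
      rw [show Sat Nf Ef (.mem x A) (Function.update (Function.update (Wval base τ v) A A')
        x b) = Ef ((Function.update (Function.update (Wval base τ v) A A') x b) x)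
          ((Function.update (Function.update (Wval base τ v) A A') x b) A) from rfl,
        e1, e3] at h4
      exact h4
    -- Step 3: build the witness and conclude.
    have haY : Ef (tg^[t+1] A') Yhat := by
      have := (tg_iter_mem (t+1) A' (Yt (t+1))).2 hA1'
      rwa [show Yt (t+1) = sg^[t+1] Yhat from rfl, tg_iter_sg_iter] at this
    show Sat MT EM (Fml.exF A (.all x (Fml.iffF (.mem x A) φ))) v
    rw [Fml.sat_exF]
    refine ⟨⟨tg^[t+1] A', haY⟩, ?_⟩
    intro b
    rw [Fml.sat_iffF]
    set aM : MT := ⟨tg^[t+1] A', haY⟩ with haM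
    set vb := Function.update (Function.update v A aM) x b with hvb
    have hfirst : ∀ c, Ef c (tg^[t] A') → Ef c Yhat := by
      refine (sg_iter_extSub t (tg^[t] A') Yhat).1 ?_
      intro c hc
      rw [sg_iter_tg_iter] at hc
      exact hA2' c hc
    have hLHS : Sat MT EM (.mem x A) vb ↔ Ef (sg^[t] b.val) A' := by
      show EM (vb x) (vb A) ↔ _
      have ex : vb x = b := Function.update_self _ _ _
      have eA : vb A = aM := by
        rw [hvb, Function.update_of_ne hAx, Function.update_self]
      rw [ex, eA]
      have esg : sg (aM.val) = tg^[t] A' := by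
        show sg (tg^[t+1] A') = tg^[t] A'
        rw [Function.iterate_succ_apply']
        exact sg_tg _
      show ((∀ c, Ef c (sg aM.val) → Ef c Yhat) ∧ Ef b.val (sg aM.val)) ↔ _
      rw [esg]
      constructor
      · rintro ⟨_, h2⟩
        have := (sg_iter_mem t b.val (tg^[t] A')).2 h2
        rwa [sg_iter_tg_iter] at this
      · intro h2
        refine ⟨hfirst, ?_⟩
        have hh : Ef (sg^[t] b.val) (sg^[t] (tg^[t] A')) := by rwa [sg_iter_tg_iter]
        exact (sg_iter_mem t _ _).1 hh
    have hRHS : Sat MT EM φ vb ↔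
        Sat Nf Ef Φ (Function.update (Function.update (Wval base τ v) A A') x
          (sg^[t] b.val)) := by
      rw [main_equiv φ base τ hNSφ hocc vb]
      refine sat_congr Φ ?_
      intro p hp
      rcases occurs_relF hp with hpφ | hpb | hpy
      · have hpA : p ≠ A := fun e => hA (e ▸ hpφ)
        have hpbase : p < base := hocc p hpφ
        by_cases hpx : p = x
        · subst hpx
          rw [Wval_lt _ _ _ (by omega), Function.update_self]
          rw [show vb p = b from Function.update_self _ _ _]
        · rw [Wval_lt _ _ _ (by omega), Function.update_of_ne hpx,
            Function.update_of_ne hpA]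
          rw [show vb p = v p from by
            rw [hvb, Function.update_of_ne hpx, Function.update_of_ne hpA]]
          rw [Wval_lt _ _ _ (by omega)]
      · subst hpb
        rw [Wval_lt _ _ _ (by omega), Function.update_of_ne (by omega : base ≠ x),
          Function.update_of_ne (by omega : base ≠ A)]
        rw [show vb base = v base from by
          rw [hvb, Function.update_of_ne (by omega : base ≠ x),
            Function.update_of_ne (by omega : base ≠ A)]]
        rw [Wval_lt _ _ _ (by omega)]
      · rw [Function.update_of_ne (by omega : p ≠ x), Function.update_of_ne
          (by omega : p ≠ A)]
        have hWp : ∀ u : ℕ → MT, Wval base τ u p = Yt (p - (base+2)) := by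
          intro u
          simp [Wval, hpy]
        rw [hWp vb, hWp v]
    rw [hLHS, hRHS]
    refine hA3' (sg^[t] b.val) ?_
    rw [show Yt t = sg^[t] Yhat from rfl, sg_iter_mem]
    exact b.2

end NFUConsistency
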